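/- arXiv:2112.11628 — 2 statements merged into one kernel-verified Lean document; each statement's English description precedes it below -/
import Mathlib

section
/- (Theorem 2, Higher Upper Bound.) Let X, X₁ ∈ ℝ^{N×d}, let c > 0 (playing the role of sλ), and suppose d_𝓜(X₁) ≤ c·d_𝓜(X). Then for every ρ ∈ (0,1), the expected SkipNode output E[X₂] = (1−ρ)X₁ + ρX satisfies d_𝓜((1−ρ)X₁ + ρX) ≤ (c + ρ(1−c))·d_𝓜(X). In particular, if c < 1 then the coefficient is strictly larger: c + ρ(1−c) > c. -/
open scoped BigOperators

/-- The Frobenius norm of a real `N × d` matrix. -/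
noncomputable def fNorm {N d : ℕ} (X : Matrix (Fin N) (Fin d) ℝ) : ℝ :=
  Real.sqrt (∑ i, ∑ j, (X i j) ^ 2)

/-- The distance (in Frobenius norm) from a matrix `X` to the subspace
`𝓜 = {∑ m, e m ⊗ w m | w m ∈ ℝ^d}` determined by the family `e` of vectors in `ℝ^N`. -/
noncomputable def distM {N d M : ℕ} (e : Fin M → Fin N → ℝ)
    (X : Matrix (Fin N) (Fin d) ℝ) : ℝ :=
  sInf {r : ℝ | ∃ w : Fin M → Fin d → ℝ,
    r = fNorm (X - Matrix.of fun i j => ∑ m, e m i * w m j)}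

lemma fNorm_eq {N d : ℕ} (X : Matrix (Fin N) (Fin d) ℝ) :
    fNorm X = ‖(WithLp.equiv 2 (Fin N × Fin d → ℝ)).symm (fun p => X p.1 p.2)‖ := by
  rw [EuclideanSpace.norm_eq, fNorm]
  congr 1
  rw [Fintype.sum_prod_type]
  simp [Real.norm_eq_abs, sq_abs]

lemma fNorm_nonneg {N d : ℕ} (X : Matrix (Fin N) (Fin d) ℝ) : 0 ≤ fNorm X :=
  Real.sqrt_nonneg _

lemma fNorm_add_le {N d : ℕ} (A B : Matrix (Fin N) (Fin d) ℝ) :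
    fNorm (A + B) ≤ fNorm A + fNorm B := by
  rw [fNorm_eq, fNorm_eq, fNorm_eq]
  have : (WithLp.equiv 2 (Fin N × Fin d → ℝ)).symm (fun p => (A + B) p.1 p.2)
      = (WithLp.equiv 2 (Fin N × Fin d → ℝ)).symm (fun p => A p.1 p.2)
        + (WithLp.equiv 2 (Fin N × Fin d → ℝ)).symm (fun p => B p.1 p.2) := rfl
  rw [this]
  exact norm_add_le _ _

lemma fNorm_smul {N d : ℕ} (r : ℝ) (A : Matrix (Fin N) (Fin d) ℝ) :
    fNorm (r • A) = |r| * fNorm A := by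
  rw [fNorm_eq, fNorm_eq]
  have : (WithLp.equiv 2 (Fin N × Fin d → ℝ)).symm (fun p => (r • A) p.1 p.2)
      = r • (WithLp.equiv 2 (Fin N × Fin d → ℝ)).symm (fun p => A p.1 p.2) := rfl
  rw [this, norm_smul, Real.norm_eq_abs]

lemma distM_set_nonempty {N d M : ℕ} (e : Fin M → Fin N → ℝ)
    (X : Matrix (Fin N) (Fin d) ℝ) :
    {r : ℝ | ∃ w : Fin M → Fin d → ℝ,
      r = fNorm (X - Matrix.of fun i j => ∑ m, e m i * w m j)}.Nonempty :=
  ⟨_, fun _ _ => 0, rfl⟩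

lemma distM_set_bddBelow {N d M : ℕ} (e : Fin M → Fin N → ℝ)
    (X : Matrix (Fin N) (Fin d) ℝ) :
    BddBelow {r : ℝ | ∃ w : Fin M → Fin d → ℝ,
      r = fNorm (X - Matrix.of fun i j => ∑ m, e m i * w m j)} := by
  refine ⟨0, fun r hr => ?_⟩
  obtain ⟨w, rfl⟩ := hr
  exact fNorm_nonneg _

theorem skipNode_higher_upper_bound {N d M : ℕ} (hN : 0 < N) (hd : 0 < d)
    (hMpos : 0 < M) (hM : M < N)
    (e : Fin M → Fin N → ℝ)
    (horth : ∀ m m' : Fin M, (∑ i, e m i * e m' i) = if m = m' then 1 else 0)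
    (X X₁ : Matrix (Fin N) (Fin d) ℝ) (c : ℝ) (hc : 0 < c)
    (hX₁ : distM e X₁ ≤ c * distM e X)
    (ρ : ℝ) (hρ0 : 0 < ρ) (hρ1 : ρ < 1) :
    distM e ((1 - ρ) • X₁ + ρ • X) ≤ (c + ρ * (1 - c)) * distM e X ∧
      (c < 1 → c < c + ρ * (1 - c)) := by
  have key : distM e ((1 - ρ) • X₁ + ρ • X) ≤ (1 - ρ) * distM e X₁ + ρ * distM e X := by
    apply le_of_forall_pos_le_add
    intro ε hε
    obtain ⟨a₁, ⟨w₁, rfl⟩, ha₁⟩ :=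
      Real.lt_sInf_add_pos (distM_set_nonempty e X₁) hε
    obtain ⟨a, ⟨w, rfl⟩, ha⟩ :=
      Real.lt_sInf_add_pos (distM_set_nonempty e X) hε
    set H₁ : Matrix (Fin N) (Fin d) ℝ := Matrix.of fun i j => ∑ m, e m i * w₁ m j
    set H : Matrix (Fin N) (Fin d) ℝ := Matrix.of fun i j => ∑ m, e m i * w m j
    have hmem : fNorm ((1 - ρ) • X₁ + ρ • X -
        Matrix.of fun i j => ∑ m, e m i * ((1 - ρ) * w₁ m j + ρ * w m j)) ∈
        {r : ℝ | ∃ w : Fin M → Fin d → ℝ,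
          r = fNorm (((1 - ρ) • X₁ + ρ • X) - Matrix.of fun i j => ∑ m, e m i * w m j)} :=
      ⟨fun m j => (1 - ρ) * w₁ m j + ρ * w m j, rfl⟩
    have hle : distM e ((1 - ρ) • X₁ + ρ • X) ≤
        fNorm ((1 - ρ) • X₁ + ρ • X -
          Matrix.of fun i j => ∑ m, e m i * ((1 - ρ) * w₁ m j + ρ * w m j)) :=
      csInf_le (distM_set_bddBelow e _) hmem
    have hsplit : (1 - ρ) • X₁ + ρ • X -
        (Matrix.of fun i j => ∑ m, e m i * ((1 - ρ) * w₁ m j + ρ * w m j)) =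
        (1 - ρ) • (X₁ - H₁) + ρ • (X - H) := by
      ext i j
      have h1 : ∑ m, e m i * ((1 - ρ) * w₁ m j + ρ * w m j) =
          (1 - ρ) * (∑ m, e m i * w₁ m j) + ρ * (∑ m, e m i * w m j) := by
        rw [Finset.mul_sum, Finset.mul_sum, ← Finset.sum_add_distrib]
        exact Finset.sum_congr rfl fun m _ => by ring
      simp only [Matrix.sub_apply, Matrix.add_apply, Matrix.smul_apply, Matrix.of_apply,
        smul_eq_mul, H₁, H, h1]
      ring
    have hbound : fNorm ((1 - ρ) • (X₁ - H₁) + ρ • (X - H)) ≤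
        (1 - ρ) * fNorm (X₁ - H₁) + ρ * fNorm (X - H) := by
      calc fNorm ((1 - ρ) • (X₁ - H₁) + ρ • (X - H))
          ≤ fNorm ((1 - ρ) • (X₁ - H₁)) + fNorm (ρ • (X - H)) := fNorm_add_le _ _
        _ = (1 - ρ) * fNorm (X₁ - H₁) + ρ * fNorm (X - H) := by
            rw [fNorm_smul, fNorm_smul, abs_of_nonneg (by linarith), abs_of_nonneg hρ0.le]
    have h1ρ : (0:ℝ) ≤ 1 - ρ := by linarith
    calc distM e ((1 - ρ) • X₁ + ρ • X)
        ≤ (1 - ρ) * fNorm (X₁ - H₁) + ρ * fNorm (X - H) := by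
          rw [hsplit] at hle; exact hle.trans hbound
      _ ≤ (1 - ρ) * (distM e X₁ + ε) + ρ * (distM e X + ε) := by
          have h1 := mul_le_mul_of_nonneg_left ha₁.le h1ρ
          have h2 := mul_le_mul_of_nonneg_left ha.le hρ0.le
          exact add_le_add h1 h2
      _ ≤ (1 - ρ) * distM e X₁ + ρ * distM e X + ε := by ring_nf; nlinarith
  constructor
  · have hD : 0 ≤ distM e X := by
      apply Real.sInf_nonneg
      rintro r ⟨w, rfl⟩
      exact fNorm_nonneg _
    nlinarith [mul_le_mul_of_nonneg_left hX₁ (by linarith : (0:ℝ) ≤ 1 - ρ)]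
  · intro hc1
    nlinarith
end

section
/- (Theorem 3, Longer Distance from 𝓜.) Let X, X₁ ∈ ℝ^{N×d}, let c > 0 (playing the role of sλ), suppose d_𝓜(X₁) ≤ c·d_𝓜(X), and let ρ ∈ (0,1) satisfy ρ(1/c + 1) − 1 > 0. Then the expected SkipNode output E[X₂] = (1−ρ)X₁ + ρX satisfies the lower bound d_𝓜((1−ρ)X₁ + ρX) ≥ (ρ(1/c + 1) − 1)·d_𝓜(X₁). -/
open scoped BigOperators

namespace SkipNodeAux

variable {N d M : ℕ}

/-- the projection-like element of the subspace determined by weights `w` -/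
def proj (e : Fin M → Fin N → ℝ) (w : Fin M → Fin d → ℝ) : Matrix (Fin N) (Fin d) ℝ :=
  Matrix.of fun i j => ∑ m, e m i * w m j

lemma distM_eq (e : Fin M → Fin N → ℝ) (X : Matrix (Fin N) (Fin d) ℝ) :
    distM e X = sInf {r : ℝ | ∃ w : Fin M → Fin d → ℝ, r = fNorm (X - proj e w)} := rfl

lemma proj_add (e : Fin M → Fin N → ℝ) (w₁ w₂ : Fin M → Fin d → ℝ) :
    proj e (w₁ + w₂) = proj e w₁ + proj e w₂ := by
  ext i j
  simp [proj, Matrix.add_apply, Finset.sum_add_distrib, mul_add]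

lemma proj_smul (e : Fin M → Fin N → ℝ) (a : ℝ) (w : Fin M → Fin d → ℝ) :
    proj e (a • w) = a • proj e w := by
  ext i j
  simp [proj, Matrix.smul_apply, Finset.mul_sum, mul_left_comm]

noncomputable def toE (X : Matrix (Fin N) (Fin d) ℝ) : EuclideanSpace ℝ (Fin N × Fin d) :=
  (WithLp.equiv 2 _).symm (fun p => X p.1 p.2)

lemma toE_add (A B : Matrix (Fin N) (Fin d) ℝ) : toE (A + B) = toE A + toE B := rfl

lemma toE_smul (a : ℝ) (A : Matrix (Fin N) (Fin d) ℝ) : toE (a • A) = a • toE A := rfl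

lemma fNorm_eq (X : Matrix (Fin N) (Fin d) ℝ) : fNorm X = ‖toE X‖ := by
  rw [EuclideanSpace.norm_eq, fNorm]
  congr 1
  rw [Fintype.sum_prod_type]
  simp [toE, Real.norm_eq_abs, sq_abs]

lemma fNorm_nonneg (X : Matrix (Fin N) (Fin d) ℝ) : 0 ≤ fNorm X := Real.sqrt_nonneg _

lemma fNorm_add_le (A B : Matrix (Fin N) (Fin d) ℝ) :
    fNorm (A + B) ≤ fNorm A + fNorm B := by
  rw [fNorm_eq, fNorm_eq, fNorm_eq, toE_add]
  exact norm_add_le _ _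

lemma fNorm_smul (a : ℝ) (A : Matrix (Fin N) (Fin d) ℝ) :
    fNorm (a • A) = |a| * fNorm A := by
  rw [fNorm_eq, fNorm_eq, toE_smul, norm_smul, Real.norm_eq_abs]

lemma set_nonempty (e : Fin M → Fin N → ℝ) (X : Matrix (Fin N) (Fin d) ℝ) :
    {r : ℝ | ∃ w : Fin M → Fin d → ℝ, r = fNorm (X - proj e w)}.Nonempty :=
  ⟨fNorm (X - proj e 0), 0, rfl⟩

lemma set_bddBelow (e : Fin M → Fin N → ℝ) (X : Matrix (Fin N) (Fin d) ℝ) :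
    BddBelow {r : ℝ | ∃ w : Fin M → Fin d → ℝ, r = fNorm (X - proj e w)} := by
  refine ⟨0, fun r hr => ?_⟩
  obtain ⟨w, rfl⟩ := hr
  exact fNorm_nonneg _

lemma distM_le (e : Fin M → Fin N → ℝ) (X : Matrix (Fin N) (Fin d) ℝ)
    (w : Fin M → Fin d → ℝ) : distM e X ≤ fNorm (X - proj e w) := by
  rw [distM_eq]
  exact csInf_le (set_bddBelow e X) ⟨w, rfl⟩

lemma distM_triangle (e : Fin M → Fin N → ℝ) (A B : Matrix (Fin N) (Fin d) ℝ) :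
    distM e (A + B) ≤ distM e A + distM e B := by
  have h : ∀ w₁ w₂ : Fin M → Fin d → ℝ,
      distM e (A + B) ≤ fNorm (A - proj e w₁) + fNorm (B - proj e w₂) := by
    intro w₁ w₂
    calc distM e (A + B) ≤ fNorm ((A + B) - proj e (w₁ + w₂)) := distM_le e _ _
    _ = fNorm ((A - proj e w₁) + (B - proj e w₂)) := by
        rw [proj_add]
        congr 1
        abel
    _ ≤ fNorm (A - proj e w₁) + fNorm (B - proj e w₂) := fNorm_add_le _ _
  have h1 : ∀ w₂ : Fin M → Fin d → ℝ,
      distM e (A + B) - fNorm (B - proj e w₂) ≤ distM e A := by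
    intro w₂
    rw [distM_eq e A]
    apply le_csInf (set_nonempty e A)
    rintro r ⟨w₁, rfl⟩
    linarith [h w₁ w₂]
  have h2 : distM e (A + B) - distM e A ≤ distM e B := by
    rw [distM_eq e B]
    apply le_csInf (set_nonempty e B)
    rintro r ⟨w₂, rfl⟩
    linarith [h1 w₂]
  linarith

lemma distM_smul (e : Fin M → Fin N → ℝ) (a : ℝ) (ha : a ≠ 0)
    (X : Matrix (Fin N) (Fin d) ℝ) : distM e (a • X) = |a| * distM e X := by
  have hab : 0 < |a| := abs_pos.mpr ha
  apply le_antisymm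
  · -- distM (a•X) ≤ |a| * fNorm (X - proj e w) for all w
    have h : ∀ w : Fin M → Fin d → ℝ, distM e (a • X) ≤ |a| * fNorm (X - proj e w) := by
      intro w
      calc distM e (a • X) ≤ fNorm (a • X - proj e (a • w)) := distM_le e _ _
      _ = fNorm (a • (X - proj e w)) := by rw [proj_smul, smul_sub]
      _ = |a| * fNorm (X - proj e w) := fNorm_smul _ _
    have : distM e (a • X) / |a| ≤ distM e X := by
      rw [distM_eq e X]
      apply le_csInf (set_nonempty e X)
      rintro r ⟨w, rfl⟩
      rw [div_le_iff₀ hab, mul_comm]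
      exact h w
    calc distM e (a • X) = |a| * (distM e (a • X) / |a|) := by field_simp
    _ ≤ |a| * distM e X := by
        exact mul_le_mul_of_nonneg_left this (le_of_lt hab)
  · -- |a| * distM X ≤ fNorm (a•X - proj e w) for all w
    have h : ∀ w : Fin M → Fin d → ℝ,
        |a| * distM e X ≤ fNorm (a • X - proj e w) := by
      intro w
      have h1 : distM e X ≤ fNorm (X - proj e (a⁻¹ • w)) := distM_le e _ _
      have h2 : fNorm (a • X - proj e w) = |a| * fNorm (X - proj e (a⁻¹ • w)) := by
        rw [← fNorm_smul, smul_sub, proj_smul, smul_smul, mul_inv_cancel₀ ha, one_smul]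
      rw [h2]
      exact mul_le_mul_of_nonneg_left h1 (le_of_lt hab)
    rw [distM_eq]
    apply le_csInf (set_nonempty e _)
    rintro r ⟨w, rfl⟩
    exact h w

end SkipNodeAux

open SkipNodeAux
theorem skipNode_longer_distance {N d M : ℕ} (hN : 0 < N) (hd : 0 < d)
    (hMpos : 0 < M) (hM : M < N)
    (e : Fin M → Fin N → ℝ)
    (horth : ∀ m m' : Fin M, (∑ i, e m i * e m' i) = if m = m' then 1 else 0)
    (X X₁ : Matrix (Fin N) (Fin d) ℝ) (c : ℝ) (hc : 0 < c)
    (hX₁ : distM e X₁ ≤ c * distM e X)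
    (ρ : ℝ) (hρ0 : 0 < ρ) (hρ1 : ρ < 1)
    (hcond : ρ * (1 / c + 1) - 1 > 0) :
    distM e ((1 - ρ) • X₁ + ρ • X) ≥ (ρ * (1 / c + 1) - 1) * distM e X₁ := by
  set T := (1 - ρ) • X₁ + ρ • X with hT
  have hsplit : ρ • X = T + (ρ - 1) • X₁ := by
    rw [hT]; module
  have htri : distM e (ρ • X) ≤ distM e T + distM e ((ρ - 1) • X₁) := by
    rw [hsplit]; exact distM_triangle e _ _
  have h1 : distM e (ρ • X) = ρ * distM e X := by
    rw [distM_smul e ρ (ne_of_gt hρ0), abs_of_pos hρ0]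
  have h2 : distM e ((ρ - 1) • X₁) = (1 - ρ) * distM e X₁ := by
    rw [distM_smul e (ρ - 1) (by linarith), abs_of_neg (by linarith : ρ - 1 < 0)]
    ring_nf
  rw [h1, h2] at htri
  have hXge : distM e X₁ / c ≤ distM e X := by
    rw [div_le_iff₀ hc]; linarith [hX₁]
  have hkey : ρ * (distM e X₁ / c) ≤ ρ * distM e X :=
    mul_le_mul_of_nonneg_left hXge (le_of_lt hρ0)
  have : ρ * (1 / c + 1) - 1 = ρ / c - (1 - ρ) := by field_simp; ring
  rw [this]
  have : ρ * (distM e X₁ / c) = (ρ / c) * distM e X₁ := by ring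
  nlinarith [htri, hkey, this]
end
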